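/- Let {σ^λ} be a sequence of weakly payoff monotone mixed-strategy profiles of the winner-bid auction (ties to h) converging to a Nash equilibrium σ whose payoff-determinant bid is p = c_l + 1. Then there exists Λ such that for all λ ≥ Λ, the expected bid of the low-valuation agent under σ_l^λ is less than c_l + 1 (provided v_l ≥ v_h/3), c_l − 1 < E_{σ_h^λ}(b) < c_l + t(v), π_l(σ^λ) < c_l + t(v) and π_h(σ^λ) > c_h + (ES − t(v)), where t(v) = max{2c_h/3 − c_l, ES/3} + 1 and ES = c_h − c_l. -/
import Mathlib


open Finset Filter

/-- Payoff to the low-valuation agent in the winner-bid auction when she bids `b`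
and the high-valuation agent bids `r` (ties won by the high-valuation agent). -/
noncomputable def UlWB (vl : ℕ) (b r : ℕ) : ℝ := if r < b then (vl : ℝ) - b else (r : ℝ)

/-- Payoff to the high-valuation agent in the winner-bid auction when she bids `b`
and the low-valuation agent bids `r` (ties won by the high-valuation agent). -/
noncomputable def UhWB (vh : ℕ) (b r : ℕ) : ℝ := if r ≤ b then (vh : ℝ) - b else (r : ℝ)

/-- A mixed strategy on the bid set `{0, ..., pbar}`. -/
def IsMixed (pbar : ℕ) (σ : ℕ → ℝ) : Prop :=
  (∀ b, 0 ≤ σ b) ∧ (∀ b, pbar < b → σ b = 0) ∧ ∑ b ∈ Finset.range (pbar + 1), σ b = 1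

/-- Expected payoff for the low-valuation agent of bidding `b` against `σh`. -/
noncomputable def eUl (pbar vl : ℕ) (σh : ℕ → ℝ) (b : ℕ) : ℝ :=
  ∑ r ∈ Finset.range (pbar + 1), σh r * UlWB vl b r

/-- Expected payoff for the high-valuation agent of bidding `b` against `σl`. -/
noncomputable def eUh (pbar vh : ℕ) (σl : ℕ → ℝ) (b : ℕ) : ℝ :=
  ∑ r ∈ Finset.range (pbar + 1), σl r * UhWB vh b r

/-- Nash equilibrium of the winner-bid auction. -/
def IsNashWB (pbar vl vh : ℕ) (σl σh : ℕ → ℝ) : Prop :=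
  IsMixed pbar σl ∧ IsMixed pbar σh ∧
  (∀ b ≤ pbar, 0 < σl b → ∀ b' ≤ pbar, eUl pbar vl σh b' ≤ eUl pbar vl σh b) ∧
  (∀ b ≤ pbar, 0 < σh b → ∀ b' ≤ pbar, eUh pbar vh σl b' ≤ eUh pbar vh σl b)

/-- Expected payoff of the low-valuation agent at a mixed profile. -/
noncomputable def piL (pbar vl : ℕ) (σl σh : ℕ → ℝ) : ℝ :=
  ∑ b ∈ Finset.range (pbar + 1), σl b * eUl pbar vl σh b

/-- Expected payoff of the high-valuation agent at a mixed profile. -/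
noncomputable def piH (pbar vh : ℕ) (σl σh : ℕ → ℝ) : ℝ :=
  ∑ b ∈ Finset.range (pbar + 1), σh b * eUh pbar vh σl b

/-- Weak payoff monotonicity for the low-valuation agent. -/
def WPMl (pbar vl : ℕ) (σl σh : ℕ → ℝ) : Prop :=
  ∀ a ≤ pbar, ∀ b ≤ pbar, σl b < σl a → eUl pbar vl σh b < eUl pbar vl σh a

/-- Weak payoff monotonicity for the high-valuation agent. -/
def WPMh (pbar vh : ℕ) (σl σh : ℕ → ℝ) : Prop :=
  ∀ a ≤ pbar, ∀ b ≤ pbar, σh b < σh a → eUh pbar vh σl b < eUh pbar vh σl a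

/-- Expected bid under a mixed strategy. -/
noncomputable def Ebid (pbar : ℕ) (σ : ℕ → ℝ) : ℝ :=
  ∑ b ∈ Finset.range (pbar + 1), σ b * b

/-- Against any nonnegative opponent distribution, bidding `cl` is weakly better for the
low-valuation agent than bidding `cl+1`, hence WPM forces `σ (cl+1) ≤ σ cl`. -/
lemma wpm_key (pbar vl cl : ℕ) (hvl : vl = 2 * cl) (hcl1 : cl + 1 ≤ pbar)
    (σ τ : ℕ → ℝ) (hτ : ∀ r, 0 ≤ τ r) (hw : WPMl pbar vl σ τ) :
    σ (cl + 1) ≤ σ cl := by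
  by_contra h
  push_neg at h
  have hlt := hw (cl + 1) hcl1 cl (by omega) h
  have hle : eUl pbar vl τ (cl + 1) ≤ eUl pbar vl τ cl := by
    apply Finset.sum_le_sum
    intro r _
    apply mul_le_mul_of_nonneg_left _ (hτ r)
    unfold UlWB
    rcases lt_trichotomy r cl with h1 | h1 | h1
    · rw [if_pos h1, if_pos (by omega)]
      push_cast; linarith
    · subst h1
      rw [if_neg (lt_irrefl r), if_pos (by omega)]
      subst hvl; push_cast; linarith
    · rw [if_neg (by omega), if_neg (by omega)]
  linarith

/-- Convergence of weakly payoff monotone play to a Nash equilibrium of the winner-bid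
auction with payoff-determinant bid `p = cl + 1`: eventually the expected bids and payoffs
satisfy the stated bounds, where `t(v) = max{2ch/3 - cl, ES/3} + 1` and `ES = ch - cl`. -/
theorem stmt13 (pbar vl vh cl ch : ℕ) (hvl : vl = 2 * cl) (hvh : vh = 2 * ch)
    (hcl : 0 < cl) (hclch : cl < ch) (hpbar : ch ≤ pbar)
    (σl σh : ℕ → ℝ) (hNash : IsNashWB pbar vl vh σl σh)
    (hsuppl : ∀ b, 0 < σl b → b ≤ cl + 1) (hsupph : ∀ b, 0 < σh b → cl + 1 ≤ b)
    (hpl : 0 < σl (cl + 1)) (hph : 0 < σh (cl + 1))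
    (σsl σsh : ℕ → ℕ → ℝ)
    (hmix : ∀ n, IsMixed pbar (σsl n) ∧ IsMixed pbar (σsh n))
    (hwpm : ∀ n, WPMl pbar vl (σsl n) (σsh n) ∧ WPMh pbar vh (σsl n) (σsh n))
    (hconvl : ∀ b, Tendsto (fun n => σsl n b) atTop (nhds (σl b)))
    (hconvh : ∀ b, Tendsto (fun n => σsh n b) atTop (nhds (σh b))) :
    ∃ N : ℕ, ∀ n ≥ N,
      (vh ≤ 3 * vl → Ebid pbar (σsl n) < (cl : ℝ) + 1) ∧
      ((cl : ℝ) - 1 < Ebid pbar (σsh n) ∧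
        Ebid pbar (σsh n) <
          (cl : ℝ) + (max (2 * (ch : ℝ) / 3 - cl) (((ch : ℝ) - cl) / 3) + 1)) ∧
      piL pbar vl (σsl n) (σsh n) <
        (cl : ℝ) + (max (2 * (ch : ℝ) / 3 - cl) (((ch : ℝ) - cl) / 3) + 1) ∧
      (ch : ℝ) + (((ch : ℝ) - cl) -
          (max (2 * (ch : ℝ) / 3 - cl) (((ch : ℝ) - cl) / 3) + 1)) <
        piH pbar vh (σsl n) (σsh n) := by
  obtain ⟨⟨hlpos, hlzero, hlsum⟩, ⟨hhpos, hhzero, hhsum⟩, hNl, hNh⟩ := hNash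
  have hclpb : cl + 1 ≤ pbar := by omega
  have hclmem : cl + 1 ∈ Finset.range (pbar + 1) := Finset.mem_range.mpr (by omega)
  -- σl vanishes above cl+1
  have hσl0 : ∀ b, cl + 1 < b → σl b = 0 := by
    intro b hb
    by_contra h0
    have : 0 < σl b := lt_of_le_of_ne (hlpos b) (Ne.symm h0)
    have := hsuppl b this
    omega
  -- formula for eUh at bids ≥ cl+1
  have heUh : ∀ b, cl + 1 ≤ b → eUh pbar vh σl b = (vh : ℝ) - b := by
    intro b hb
    unfold eUh
    have hcong : ∀ r ∈ Finset.range (pbar + 1),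
        σl r * UhWB vh b r = σl r * ((vh : ℝ) - b) := by
      intro r _
      by_cases h0 : σl r = 0
      · simp [h0]
      · have hrle : r ≤ cl + 1 := hsuppl r (lt_of_le_of_ne (hlpos r) (Ne.symm h0))
        have : r ≤ b := le_trans hrle hb
        simp [UhWB, this]
    rw [Finset.sum_congr rfl hcong, ← Finset.sum_mul, hlsum, one_mul]
  -- σh vanishes off cl+1
  have hσh0 : ∀ b, b ≠ cl + 1 → σh b = 0 := by
    intro b hb
    by_contra h0
    have hbpos : 0 < σh b := lt_of_le_of_ne (hhpos b) (Ne.symm h0)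
    have hbge : cl + 1 ≤ b := hsupph b hbpos
    have hbgt : cl + 1 < b := lt_of_le_of_ne hbge (fun h => hb h.symm)
    have hbpb : b ≤ pbar := by
      by_contra hc
      exact h0 (hhzero b (by omega))
    have hle := hNh b hbpb hbpos (cl + 1) hclpb
    rw [heUh b hbge, heUh (cl + 1) le_rfl] at hle
    have : (b : ℝ) ≤ (cl : ℝ) + 1 := by push_cast at hle ⊢; linarith
    have : (b : ℝ) > (cl : ℝ) + 1 := by exact_mod_cast (by exact_mod_cast hbgt : ((cl + 1 : ℕ) : ℝ) < b)
    linarith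
  have hσh1 : σh (cl + 1) = 1 := by
    have := hhsum
    rwa [Finset.sum_eq_single (cl + 1) (fun b _ hb => hσh0 b hb)
      (fun hc => absurd hclmem hc)] at this
  -- exact limit values
  have hEbidh : Ebid pbar σh = (cl : ℝ) + 1 := by
    unfold Ebid
    rw [Finset.sum_eq_single (cl + 1) (fun b _ hb => by rw [hσh0 b hb, zero_mul])
      (fun hc => absurd hclmem hc), hσh1, one_mul]
    push_cast; ring
  have heUl : ∀ b ≤ cl + 1, eUl pbar vl σh b = (cl : ℝ) + 1 := by
    intro b hb
    unfold eUl
    rw [Finset.sum_eq_single (cl + 1) (fun r _ hr => by rw [hσh0 r hr, zero_mul])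
      (fun hc => absurd hclmem hc), hσh1, one_mul]
    have : ¬ (cl + 1 < b) := by omega
    simp only [UlWB, if_neg this]
    push_cast; ring
  have hpiLv : piL pbar vl σl σh = (cl : ℝ) + 1 := by
    unfold piL
    have hcong : ∀ b ∈ Finset.range (pbar + 1),
        σl b * eUl pbar vl σh b = σl b * ((cl : ℝ) + 1) := by
      intro b _
      by_cases h0 : σl b = 0
      · simp [h0]
      · have hble : b ≤ cl + 1 := hsuppl b (lt_of_le_of_ne (hlpos b) (Ne.symm h0))
        rw [heUl b hble]
    rw [Finset.sum_congr rfl hcong, ← Finset.sum_mul, hlsum, one_mul]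
  have hpiHv : piH pbar vh σl σh = (vh : ℝ) - ((cl : ℝ) + 1) := by
    unfold piH
    rw [Finset.sum_eq_single (cl + 1) (fun b _ hb => by rw [hσh0 b hb, zero_mul])
      (fun hc => absurd hclmem hc), hσh1, one_mul, heUh (cl + 1) le_rfl]
    push_cast; ring
  -- the WPM inequality along the sequence and in the limit
  have hkeyn : ∀ n, σsl n (cl + 1) ≤ σsl n cl := fun n =>
    wpm_key pbar vl cl hvl hclpb (σsl n) (σsh n) ((hmix n).2).1 (hwpm n).1
  have hlimkey : σl (cl + 1) ≤ σl cl :=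
    le_of_tendsto_of_tendsto' (hconvl (cl + 1)) (hconvl cl) hkeyn
  have hclpos : 0 < σl cl := lt_of_lt_of_le hpl hlimkey
  -- low agent's limit expected bid is strictly below cl+1
  have hEbidl : Ebid pbar σl ≤ (cl : ℝ) + 1 - σl cl := by
    have hnn : ∀ b ∈ Finset.range (pbar + 1), 0 ≤ σl b * ((cl : ℝ) + 1 - b) := by
      intro b _
      by_cases hb : b ≤ cl + 1
      · apply mul_nonneg (hlpos b)
        have : (b : ℝ) ≤ (cl : ℝ) + 1 := by exact_mod_cast (by exact_mod_cast hb : (b:ℝ) ≤ ((cl+1:ℕ):ℝ))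
        linarith
      · rw [hσl0 b (by omega), zero_mul]
    have hmem : cl ∈ Finset.range (pbar + 1) := Finset.mem_range.mpr (by omega)
    have h1 : σl cl * ((cl : ℝ) + 1 - cl) ≤
        ∑ b ∈ Finset.range (pbar + 1), σl b * ((cl : ℝ) + 1 - b) :=
      Finset.single_le_sum hnn hmem
    have h2 : ∑ b ∈ Finset.range (pbar + 1), σl b * ((cl : ℝ) + 1 - b)
        = ((cl : ℝ) + 1) - Ebid pbar σl := by
      unfold Ebid
      have hc : ∀ b ∈ Finset.range (pbar + 1),
          σl b * ((cl : ℝ) + 1 - b) = σl b * ((cl : ℝ) + 1) - σl b * b := by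
        intro b _; ring
      rw [Finset.sum_congr rfl hc, Finset.sum_sub_distrib, ← Finset.sum_mul, hlsum, one_mul]
    rw [show ((cl : ℝ) + 1 - cl) = 1 by ring, mul_one] at h1
    linarith
  have hEbidl' : Ebid pbar σl < (cl : ℝ) + 1 := by linarith
  -- continuity
  have hTl : Tendsto (fun n => Ebid pbar (σsl n)) atTop (nhds (Ebid pbar σl)) := by
    unfold Ebid
    exact tendsto_finset_sum _ (fun b _ => (hconvl b).mul_const _)
  have hTh : Tendsto (fun n => Ebid pbar (σsh n)) atTop (nhds ((cl : ℝ) + 1)) := by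
    rw [← hEbidh]
    unfold Ebid
    exact tendsto_finset_sum _ (fun b _ => (hconvh b).mul_const _)
  have hTpiL : Tendsto (fun n => piL pbar vl (σsl n) (σsh n)) atTop (nhds ((cl : ℝ) + 1)) := by
    rw [← hpiLv]
    unfold piL eUl
    exact tendsto_finset_sum _ (fun b _ =>
      (hconvl b).mul (tendsto_finset_sum _ (fun r _ => (hconvh r).mul_const _)))
  have hTpiH : Tendsto (fun n => piH pbar vh (σsl n) (σsh n)) atTop
      (nhds ((vh : ℝ) - ((cl : ℝ) + 1))) := by
    rw [← hpiHv]
    unfold piH eUh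
    exact tendsto_finset_sum _ (fun b _ =>
      (hconvh b).mul (tendsto_finset_sum _ (fun r _ => (hconvl r).mul_const _)))
  -- the constant t(v) - 1 is positive
  set M : ℝ := max (2 * (ch : ℝ) / 3 - cl) (((ch : ℝ) - cl) / 3) with hMdef
  have hchcl : (cl : ℝ) < ch := by exact_mod_cast hclch
  have hM : 0 < M := lt_of_lt_of_le (by linarith : (0 : ℝ) < ((ch : ℝ) - cl) / 3)
    (le_max_right _ _)
  have hvhR : (vh : ℝ) = 2 * ch := by exact_mod_cast hvh
  -- eventual inequalities
  have E1 : ∀ᶠ n in atTop, Ebid pbar (σsl n) < (cl : ℝ) + 1 :=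
    hTl.eventually (eventually_lt_nhds hEbidl')
  have E2 : ∀ᶠ n in atTop, (cl : ℝ) - 1 < Ebid pbar (σsh n) :=
    hTh.eventually (eventually_gt_nhds (by linarith))
  have E3 : ∀ᶠ n in atTop, Ebid pbar (σsh n) < (cl : ℝ) + (M + 1) :=
    hTh.eventually (eventually_lt_nhds (by linarith))
  have E4 : ∀ᶠ n in atTop, piL pbar vl (σsl n) (σsh n) < (cl : ℝ) + (M + 1) :=
    hTpiL.eventually (eventually_lt_nhds (by linarith))
  have E5 : ∀ᶠ n in atTop,
      (ch : ℝ) + (((ch : ℝ) - cl) - (M + 1)) < piH pbar vh (σsl n) (σsh n) :=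
    hTpiH.eventually (eventually_gt_nhds (by rw [hvhR]; linarith))
  obtain ⟨N, hN⟩ := Filter.eventually_atTop.mp (E1.and (E2.and (E3.and (E4.and E5))))
  exact ⟨N, fun n hn =>
    ⟨fun _ => (hN n hn).1, ⟨(hN n hn).2.1, (hN n hn).2.2.1⟩,
      (hN n hn).2.2.2.1, (hN n hn).2.2.2.2⟩⟩
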